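/- Let A be a nonsingular q×q complex matrix, let λ_1, …, λ_s be distinct nonzero complex numbers and z_1, …, z_s ∈ ℂ with e^{z_e} = λ_e for each e. Suppose there are polynomials P_{e,ij} ∈ ℂ[X] (1 ≤ e ≤ s, 1 ≤ i, j ≤ q) such that for all natural numbers k and all i, j, the (i,j) entry of A^k equals Σ_{e=1}^s P_{e,ij}(k)·λ_e^k. Then the matrix L whose (i,j) entry is Σ_{e=1}^s ( p_{e,ij,1} + p_{e,ij,0}·z_e ), where p_{e,ij,0} and p_{e,ij,1} are the coefficients of X^0 and X^1 in P_{e,ij}, satisfies exp(L) = A; i.e., L is a logarithm of A. -/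

import Mathlib

open Polynomial Matrix

section AuxLemmas

open Polynomial

lemma poly_eval_nat_zero (Q : ℂ[X]) (h : ∀ k : ℕ, Q.eval (k : ℂ) = 0) : Q = 0 := by
  refine Q.eq_zero_of_infinite_isRoot ?_
  exact Set.infinite_of_injective_forall_mem (f := fun k : ℕ => (k : ℂ))
    (fun a b hab => Nat.cast_injective hab) (fun k => h k)

lemma comp_shift_lc (Q : ℂ[X]) : (Q.comp (X + C 1)).leadingCoeff = Q.leadingCoeff := by
  rcases eq_or_ne Q 0 with rfl | hQ
  · simp
  rw [leadingCoeff_comp (by rw [natDegree_X_add_C]; exact one_ne_zero),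
    leadingCoeff_X_add_C, one_pow, mul_one]

lemma comp_shift_natDegree (Q : ℂ[X]) : (Q.comp (X + C 1)).natDegree = Q.natDegree := by
  rw [natDegree_comp, natDegree_X_add_C, mul_one]

lemma comp_shift_eq_zero (μ ν : ℂ) (hμν : μ ≠ ν) (Q : ℂ[X])
    (h : μ • Q.comp (X + C 1) = ν • Q) : Q = 0 := by
  by_contra hQ
  have hlc := congrArg leadingCoeff h
  rw [smul_eq_C_mul, smul_eq_C_mul, leadingCoeff_mul, leadingCoeff_mul, leadingCoeff_C,
    leadingCoeff_C, comp_shift_lc] at hlc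
  exact hμν (mul_right_cancel₀ (leadingCoeff_ne_zero.mpr hQ) hlc)

lemma natDegree_shift_sub_le (Q : ℂ[X]) (n : ℕ) (h : Q.natDegree ≤ n + 1) :
    (Q.comp (X + C 1) - Q).natDegree ≤ n := by
  rcases eq_or_ne (Q.comp (X + C 1)) Q with he | he
  · rw [he, sub_self]; simp
  rcases eq_or_ne Q 0 with rfl | hQ
  · simp
  have hc0 : Q.comp (X + C 1) ≠ 0 := by
    intro hz
    apply hQ
    rw [← leadingCoeff_eq_zero, ← comp_shift_lc, hz, leadingCoeff_zero]
  have hdlt := degree_sub_lt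
    (by rw [degree_eq_natDegree hc0, degree_eq_natDegree hQ, comp_shift_natDegree]) hc0
    (comp_shift_lc Q)
  have hlt : (Q.comp (X + C 1) - Q).natDegree < Q.natDegree := by
    apply natDegree_lt_natDegree (sub_ne_zero.mpr he)
    rw [degree_eq_natDegree hQ]
    rw [degree_eq_natDegree hc0, comp_shift_natDegree] at hdlt
    exact hdlt
  omega

lemma vanish : ∀ (s : ℕ) (lam : Fin s → ℂ), Function.Injective lam → (∀ e, lam e ≠ 0) →
    ∀ (Q : Fin s → ℂ[X]), (∀ k : ℕ, ∑ e, (Q e).eval (k : ℂ) * lam e ^ k = 0) → ∀ e, Q e = 0 := by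
  intro s
  induction s with
  | zero => intro lam _ _ Q _ e; exact e.elim0
  | succ s IH =>
    intro lam hinj hne
    have hRsum : ∀ (Q : Fin (s+1) → ℂ[X]),
        (∀ k : ℕ, ∑ e, (Q e).eval (k:ℂ) * lam e ^ k = 0) →
        ∀ k : ℕ, ∑ e, (lam e • (Q e).comp (X + C 1) - lam (Fin.last s) • Q e).eval (k:ℂ)
          * lam e ^ k = 0 := by
      intro Q h k
      have h1 := h (k+1)
      push_cast at h1
      have h2 := h k
      have hterm : ∀ e : Fin (s+1),
          (lam e • (Q e).comp (X + C 1) - lam (Fin.last s) • Q e).eval (k:ℂ) * lam e ^ k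
          = (Q e).eval ((k:ℂ)+1) * lam e ^ (k+1)
            - lam (Fin.last s) * ((Q e).eval (k:ℂ) * lam e ^ k) := by
        intro e
        simp only [eval_sub, eval_smul, eval_comp, eval_add, eval_X, eval_C, smul_eq_mul]
        ring
      rw [Finset.sum_congr rfl (fun e _ => hterm e), Finset.sum_sub_distrib, ← Finset.mul_sum,
        h1, h2, mul_zero, sub_zero]
    have hlast : ∀ (Q : Fin (s+1) → ℂ[X]),
        (∀ k : ℕ, ∑ e, (Q e).eval (k:ℂ) * lam e ^ k = 0) →
        (∀ e : Fin s, Q (Fin.castSucc e) = 0) → Q (Fin.last s) = 0 := by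
      intro Q h hc
      apply poly_eval_nat_zero
      intro k
      have hk := h k
      rw [Fin.sum_univ_castSucc] at hk
      simp only [hc, eval_zero, zero_mul, Finset.sum_const_zero, zero_add] at hk
      exact (mul_eq_zero.mp hk).resolve_right (pow_ne_zero _ (hne _))
    suffices aux : ∀ n (Q : Fin (s+1) → ℂ[X]), (Q (Fin.last s)).natDegree ≤ n →
        (∀ k : ℕ, ∑ e, (Q e).eval (k:ℂ) * lam e ^ k = 0) → ∀ e, Q e = 0 by
      intro Q hQ e
      exact aux _ Q le_rfl hQ e
    intro n
    induction n with
    | zero =>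
      intro Q hdeg h
      have hC := eq_C_of_natDegree_le_zero hdeg
      have hRlast : lam (Fin.last s) • (Q (Fin.last s)).comp (X + C 1)
          - lam (Fin.last s) • Q (Fin.last s) = 0 := by
        conv_lhs => rw [hC]
        rw [C_comp, sub_self]
      have hs' : ∀ k : ℕ, ∑ e : Fin s,
          (lam (Fin.castSucc e) • (Q (Fin.castSucc e)).comp (X + C 1)
            - lam (Fin.last s) • Q (Fin.castSucc e)).eval (k:ℂ)
          * (lam ∘ Fin.castSucc) e ^ k = 0 := by
        intro k
        have hk := hRsum Q h k
        rw [Fin.sum_univ_castSucc, hRlast] at hk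
        simpa using hk
      have hR0 := IH (lam ∘ Fin.castSucc) (hinj.comp (Fin.castSucc_injective s))
        (fun e => hne _)
        (fun e => lam (Fin.castSucc e) • (Q (Fin.castSucc e)).comp (X + C 1)
          - lam (Fin.last s) • Q (Fin.castSucc e)) hs'
      have hc : ∀ e : Fin s, Q (Fin.castSucc e) = 0 := by
        intro e
        exact comp_shift_eq_zero (lam (Fin.castSucc e)) (lam (Fin.last s))
          (fun hEq => (Fin.castSucc_lt_last e).ne (hinj hEq)) _ (sub_eq_zero.mp (hR0 e))
      intro e
      refine Fin.lastCases ?_ (fun i => hc i) e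
      exact hlast Q h hc
    | succ n ih =>
      intro Q hdeg h
      have hRdeg : ((fun e => lam e • (Q e).comp (X + C 1) - lam (Fin.last s) • Q e)
          (Fin.last s)).natDegree ≤ n := by
        show (lam (Fin.last s) • (Q (Fin.last s)).comp (X + C 1)
          - lam (Fin.last s) • Q (Fin.last s)).natDegree ≤ n
        rw [← smul_sub]
        exact le_trans (natDegree_smul_le _ _) (natDegree_shift_sub_le _ n hdeg)
      have hR0 := ih (fun e => lam e • (Q e).comp (X + C 1) - lam (Fin.last s) • Q e)
        hRdeg (hRsum Q h)
      have hc : ∀ e : Fin s, Q (Fin.castSucc e) = 0 := by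
        intro e
        exact comp_shift_eq_zero (lam (Fin.castSucc e)) (lam (Fin.last s))
          (fun hEq => (Fin.castSucc_lt_last e).ne (hinj hEq)) _
          (sub_eq_zero.mp (hR0 (Fin.castSucc e)))
      intro e
      refine Fin.lastCases ?_ (fun i => hc i) e
      exact hlast Q h hc

lemma eqpoly (s : ℕ) (lam : Fin s → ℂ) (hinj : Function.Injective lam) (hne : ∀ e, lam e ≠ 0)
    (Q R : Fin s → ℂ[X])
    (h : ∀ k : ℕ, ∑ e, (Q e).eval (k:ℂ) * lam e ^ k = ∑ e, (R e).eval (k:ℂ) * lam e ^ k) :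
    ∀ e, Q e = R e := by
  intro e
  have := vanish s lam hinj hne (fun e => Q e - R e)
    (fun k => by
      simp only [eval_sub, sub_mul, Finset.sum_sub_distrib, h k, sub_self]) e
  exact sub_eq_zero.mp this

section KeyOde
open NormedSpace

theorem key_ode {𝔸 : Type*} [NormedRing 𝔸] [NormedAlgebra ℂ 𝔸] [CompleteSpace 𝔸]
    (L : 𝔸) (f : ℂ → 𝔸) (h0 : f 0 = 1)
    (hd : ∀ t, HasDerivAt f (L * f t) t) : f 1 = exp L := by
  set g : ℂ → 𝔸 := fun t => exp ((-t) • L) * f t with hg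
  have hgd : ∀ t, HasDerivAt g 0 t := by
    intro t
    have h1 : HasDerivAt (fun u : ℂ => exp ((-u) • L)) ((-1 : ℂ) • (exp ((-t) • L) * L)) t := by
      have := (hasDerivAt_exp_smul_const (𝕂 := ℂ) L (-t)).scomp t (hasDerivAt_neg t)
      simpa [Function.comp_def] using this
    have h2 := h1.mul (hd t)
    have : ((-1 : ℂ) • (exp ((-t) • L) * L)) * f t + exp ((-t) • L) * (L * f t) = 0 := by
      simp [mul_assoc]
    rw [← this]
    exact h2
  have hconst : g 1 = g 0 := by
    apply is_const_of_deriv_eq_zero (fun t => (hgd t).differentiableAt)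
    intro x; exact (hgd x).deriv
  have hg0 : g 0 = 1 := by simp [hg, h0, exp_zero]
  have hinv : exp ((1 : ℂ) • L) * exp ((-1 : ℂ) • L) = 1 := by
    rw [← NormedSpace.exp_add_of_commute_of_mem_ball (𝕂 := ℂ)]
    · simp [NormedSpace.exp_zero]
    · exact (Commute.refl L).smul_left _ |>.smul_right _
    · exact (NormedSpace.expSeries_radius_eq_top ℂ 𝔸).symm ▸ edist_lt_top _ _
    · exact (NormedSpace.expSeries_radius_eq_top ℂ 𝔸).symm ▸ edist_lt_top _ _
  have : exp ((-1:ℂ) • L) * f 1 = 1 := by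
    have := hconst; rw [hg0] at this; simpa [hg] using this
  calc f 1 = (exp ((1:ℂ) • L) * exp ((-1:ℂ) • L)) * f 1 := by rw [hinv, one_mul]
    _ = exp ((1:ℂ) • L) * (exp ((-1:ℂ) • L) * f 1) := by rw [mul_assoc]
    _ = exp L := by rw [this, mul_one, one_smul]
end KeyOde

end AuxLemmas

/-- Let `A` be a nonsingular `q × q` complex matrix, `λ₁, …, λ_s` distinct nonzero complex
numbers with `e^{z_e} = λ_e`, and `P_{e,ij} ∈ ℂ[X]` polynomials such that
`(A^k)_{ij} = ∑_e P_{e,ij}(k) λ_e^k` for all `k`.  Then the matrix `L` with entries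
`L_{ij} = ∑_e (p_{e,ij,1} + p_{e,ij,0} z_e)`, where `p_{e,ij,0}`, `p_{e,ij,1}` are the
coefficients of `X^0` and `X^1` in `P_{e,ij}`, satisfies `exp L = A`. -/
theorem log_of_power_expansion (q : ℕ) (hq : 0 < q) (s : ℕ)
    (A : Matrix (Fin q) (Fin q) ℂ) (hA : IsUnit A.det)
    (lam : Fin s → ℂ) (hinj : Function.Injective lam) (hne : ∀ e, lam e ≠ 0)
    (z : Fin s → ℂ) (hz : ∀ e, Complex.exp (z e) = lam e)
    (P : Fin s → Fin q → Fin q → Polynomial ℂ)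
    (hP : ∀ (k : ℕ) (i j : Fin q),
      (A ^ k) i j = ∑ e, (P e i j).eval (k : ℂ) * lam e ^ k)
    (L : Matrix (Fin q) (Fin q) ℂ)
    (hL : L = Matrix.of fun i j => ∑ e, ((P e i j).coeff 1 + (P e i j).coeff 0 * z e)) :
    NormedSpace.exp L = A := by
  classical
  letI : SeminormedRing (Matrix (Fin q) (Fin q) ℂ) := Matrix.linftyOpSemiNormedRing
  letI : NormedRing (Matrix (Fin q) (Fin q) ℂ) := Matrix.linftyOpNormedRing
  letI : NormedAlgebra ℂ (Matrix (Fin q) (Fin q) ℂ) := Matrix.linftyOpNormedAlgebra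
  set F : ℂ → Matrix (Fin q) (Fin q) ℂ :=
    fun t => Matrix.of fun i j => ∑ e, (P e i j).eval t * Complex.exp (z e * t) with hF
  have hzk : ∀ (e : Fin s) (k : ℕ), Complex.exp (z e * (k : ℂ)) = lam e ^ k := by
    intro e k
    rw [mul_comm, Complex.exp_nat_mul, hz]
  have hFnat : ∀ k : ℕ, F (k : ℂ) = A ^ k := by
    intro k
    ext i j
    show ∑ e, (P e i j).eval (k:ℂ) * Complex.exp (z e * (k:ℂ)) = (A ^ k) i j
    rw [hP k i j]
    exact Finset.sum_congr rfl fun e _ => by rw [hzk]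
  have h0 : F 0 = 1 := by
    have := hFnat 0
    simpa using this
  have h1 : F 1 = A := by
    have := hFnat 1
    simpa using this
  -- Step 1 : F (t + k) = A^k * F t
  have hstep1 : ∀ (k : ℕ) (t : ℂ), F (t + (k : ℂ)) = A ^ k * F t := by
    intro k t
    have hpoly : ∀ (i j : Fin q) (e : Fin s),
        (lam e ^ k) • (P e i j).comp (X + C (k:ℂ)) = ∑ l, ((A ^ k) i l) • P e l j := by
      intro i j
      apply eqpoly s lam hinj hne
      intro m
      have hLeft : ∑ e, ((lam e ^ k) • (P e i j).comp (X + C (k:ℂ))).eval (m:ℂ) * lam e ^ m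
          = (A ^ (k + m)) i j := by
        rw [hP (k+m) i j]
        push_cast
        apply Finset.sum_congr rfl
        intro e _
        simp only [eval_smul, eval_comp, eval_add, eval_X, eval_C, smul_eq_mul, pow_add]
        rw [add_comm (m:ℂ) (k:ℂ)]
        ring
      have hRight : ∑ e, (∑ l, ((A ^ k) i l) • P e l j).eval (m:ℂ) * lam e ^ m
          = (A ^ (k + m)) i j := by
        calc ∑ e, (∑ l, ((A ^ k) i l) • P e l j).eval (m:ℂ) * lam e ^ m
            = ∑ e, ∑ l, (A ^ k) i l * ((P e l j).eval (m:ℂ) * lam e ^ m) := by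
              apply Finset.sum_congr rfl
              intro e _
              rw [eval_finset_sum, Finset.sum_mul]
              apply Finset.sum_congr rfl
              intro l _
              simp only [eval_smul, smul_eq_mul]
              ring
          _ = ∑ l, (A ^ k) i l * ∑ e, (P e l j).eval (m:ℂ) * lam e ^ m := by
              rw [Finset.sum_comm]
              simp only [Finset.mul_sum]
          _ = ∑ l, (A ^ k) i l * (A ^ m) l j := by
              apply Finset.sum_congr rfl
              intro l _
              rw [← hP m l j]
          _ = (A ^ (k + m)) i j := by rw [pow_add, Matrix.mul_apply]
      rw [hLeft, hRight]
    ext i j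
    show ∑ e, (P e i j).eval (t + (k:ℂ)) * Complex.exp (z e * (t + (k:ℂ))) = (A ^ k * F t) i j
    calc ∑ e, (P e i j).eval (t + (k:ℂ)) * Complex.exp (z e * (t + (k:ℂ)))
        = ∑ e, ((lam e ^ k) • (P e i j).comp (X + C (k:ℂ))).eval t * Complex.exp (z e * t) := by
          apply Finset.sum_congr rfl
          intro e _
          simp only [eval_smul, eval_comp, eval_add, eval_X, eval_C, smul_eq_mul]
          rw [mul_add, Complex.exp_add, hzk]
          ring
      _ = ∑ e, (∑ l, ((A ^ k) i l) • P e l j).eval t * Complex.exp (z e * t) := by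
          apply Finset.sum_congr rfl
          intro e _
          rw [hpoly i j e]
      _ = ∑ e, ∑ l, (A ^ k) i l * ((P e l j).eval t * Complex.exp (z e * t)) := by
          apply Finset.sum_congr rfl
          intro e _
          rw [eval_finset_sum, Finset.sum_mul]
          apply Finset.sum_congr rfl
          intro l _
          simp only [eval_smul, smul_eq_mul]
          ring
      _ = ∑ l, (A ^ k) i l * ∑ e, (P e l j).eval t * Complex.exp (z e * t) := by
          rw [Finset.sum_comm]
          simp only [Finset.mul_sum]
      _ = (A ^ k * F t) i j := by
          rw [Matrix.mul_apply]
          rfl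
  -- Step 2 : full multiplicativity F (u + t) = F u * F t
  have hmul : ∀ (t u : ℂ), F (u + t) = F u * F t := by
    intro t u
    have hpoly : ∀ (i j : Fin q) (e : Fin s),
        Complex.exp (z e * t) • (P e i j).comp (X + C t) = ∑ l, (F t l j) • P e i l := by
      intro i j
      apply eqpoly s lam hinj hne
      intro k
      have hLeft : ∑ e, (Complex.exp (z e * t) • (P e i j).comp (X + C t)).eval (k:ℂ)
          * lam e ^ k = F ((k:ℂ) + t) i j := by
        show _ = ∑ e, (P e i j).eval ((k:ℂ) + t) * Complex.exp (z e * ((k:ℂ) + t))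
        apply Finset.sum_congr rfl
        intro e _
        simp only [eval_smul, eval_comp, eval_add, eval_X, eval_C, smul_eq_mul]
        rw [mul_add, Complex.exp_add, hzk]
        ring
      have hRight : ∑ e, (∑ l, (F t l j) • P e i l).eval (k:ℂ) * lam e ^ k
          = (A ^ k * F t) i j := by
        calc ∑ e, (∑ l, (F t l j) • P e i l).eval (k:ℂ) * lam e ^ k
            = ∑ e, ∑ l, ((P e i l).eval (k:ℂ) * lam e ^ k) * F t l j := by
              apply Finset.sum_congr rfl
              intro e _
              rw [eval_finset_sum, Finset.sum_mul]
              apply Finset.sum_congr rfl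
              intro l _
              simp only [eval_smul, smul_eq_mul]
              ring
          _ = ∑ l, (∑ e, (P e i l).eval (k:ℂ) * lam e ^ k) * F t l j := by
              rw [Finset.sum_comm]
              simp only [Finset.sum_mul]
          _ = ∑ l, (A ^ k) i l * F t l j := by
              apply Finset.sum_congr rfl
              intro l _
              rw [← hP k i l]
          _ = (A ^ k * F t) i j := by rw [Matrix.mul_apply]
      rw [hLeft, hRight, add_comm (k:ℂ) t, hstep1 k t]
    ext i j
    show ∑ e, (P e i j).eval (u + t) * Complex.exp (z e * (u + t)) = (F u * F t) i j
    calc ∑ e, (P e i j).eval (u + t) * Complex.exp (z e * (u + t))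
        = ∑ e, (Complex.exp (z e * t) • (P e i j).comp (X + C t)).eval u
            * Complex.exp (z e * u) := by
          apply Finset.sum_congr rfl
          intro e _
          simp only [eval_smul, eval_comp, eval_add, eval_X, eval_C, smul_eq_mul]
          rw [mul_add, Complex.exp_add]
          ring
      _ = ∑ e, (∑ l, (F t l j) • P e i l).eval u * Complex.exp (z e * u) := by
          apply Finset.sum_congr rfl
          intro e _
          rw [hpoly i j e]
      _ = ∑ e, ∑ l, ((P e i l).eval u * Complex.exp (z e * u)) * F t l j := by
          apply Finset.sum_congr rfl
          intro e _
          rw [eval_finset_sum, Finset.sum_mul]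
          apply Finset.sum_congr rfl
          intro l _
          simp only [eval_smul, smul_eq_mul]
          ring
      _ = ∑ l, (∑ e, (P e i l).eval u * Complex.exp (z e * u)) * F t l j := by
          rw [Finset.sum_comm]
          simp only [Finset.sum_mul]
      _ = (F u * F t) i j := by
          rw [Matrix.mul_apply]
          rfl
  -- derivative of F at 0
  have hFent : ∀ (i j : Fin q),
      HasDerivAt (fun u => ∑ e, (P e i j).eval u * Complex.exp (z e * u))
        (∑ e, ((derivative (P e i j)).eval 0 + (P e i j).eval 0 * z e)) 0 := by
    intro i j
    have hterm : ∀ e : Fin s,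
        HasDerivAt (fun u => (P e i j).eval u * Complex.exp (z e * u))
          ((derivative (P e i j)).eval 0 + (P e i j).eval 0 * z e) 0 := by
      intro e
      have h1 : HasDerivAt (fun u : ℂ => (P e i j).eval u) ((derivative (P e i j)).eval 0) 0 :=
        (P e i j).hasDerivAt 0
      have h2 : HasDerivAt (fun u : ℂ => Complex.exp (z e * u)) (z e) 0 := by
        have := ((hasDerivAt_id (0:ℂ)).const_mul (z e)).cexp
        simpa using this
      have := h1.fun_mul h2
      simpa using this
    exact HasDerivAt.fun_sum (fun e _ => hterm e)
  set M0 : Matrix (Fin q) (Fin q) ℂ :=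
    Matrix.of fun i j => ∑ e, ((derivative (P e i j)).eval 0 + (P e i j).eval 0 * z e) with hM0
  have hFd0 : HasDerivAt F M0 0 := by
    have hrw : ∀ u : ℂ, F u = ∑ i : Fin q, ∑ j : Fin q,
        (∑ e, (P e i j).eval u * Complex.exp (z e * u)) • Matrix.single i j (1:ℂ) := by
      intro u
      conv_lhs => rw [matrix_eq_sum_single (F u)]
      apply Finset.sum_congr rfl
      intro i _
      apply Finset.sum_congr rfl
      intro j _
      rw [Matrix.smul_single, smul_eq_mul, mul_one]
      rfl
    have hDval : M0 = ∑ i : Fin q, ∑ j : Fin q,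
        (∑ e, ((derivative (P e i j)).eval 0 + (P e i j).eval 0 * z e))
          • Matrix.single i j (1:ℂ) := by
      conv_lhs => rw [matrix_eq_sum_single M0]
      apply Finset.sum_congr rfl
      intro i _
      apply Finset.sum_congr rfl
      intro j _
      rw [Matrix.smul_single, smul_eq_mul, mul_one]
      rfl
    rw [funext hrw, hDval]
    exact HasDerivAt.fun_sum fun i _ => HasDerivAt.fun_sum fun j _ => (hFent i j).smul_const _
  have hFd : ∀ t : ℂ, HasDerivAt F (M0 * F t) t := by
    intro t
    have hshift : ∀ u : ℂ, F u = F (u - t) * F t := by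
      intro u
      have := hmul t (u - t)
      rwa [sub_add_cancel] at this
    have hin : HasDerivAt (fun u : ℂ => F (u - t)) M0 t := by
      have h0' : HasDerivAt F M0 (t - t) := by rwa [sub_self]
      exact HasDerivAt.comp_sub_const t t h0'
    have h2 := hin.mul_const (F t)
    exact h2.congr_of_eventuallyEq (Filter.Eventually.of_forall fun u => hshift u)
  have hM0L : M0 = L := by
    rw [hL, hM0]
    ext i j
    show (∑ e, ((derivative (P e i j)).eval 0 + (P e i j).eval 0 * z e))
      = ∑ e, ((P e i j).coeff 1 + (P e i j).coeff 0 * z e)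
    apply Finset.sum_congr rfl
    intro e _
    have hd : (derivative (P e i j)).eval 0 = (P e i j).coeff 1 := by
      rw [← coeff_zero_eq_eval_zero, coeff_derivative]
      push_cast
      ring
    rw [hd, coeff_zero_eq_eval_zero]
  rw [hM0L] at hFd
  have hfin := key_ode L F h0 hFd
  exact hfin.symm.trans h1
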